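/- arXiv:1401.7964 — 6 statements merged into one kernel-verified Lean document; each statement's English description precedes it below -/
import Mathlib

section
/- A metric space X is of the first category (i.e., X is a countable union of subsets that are nowhere dense in X) if and only if X contains a dense subset which is σ-discrete in X, is a Gδ-set in X, and has no isolated points. -/
open Set Topology

/-- A subset `A` of a topological space `X` is σ-discrete (in `X`) if it is a countable
union of sets `A n` such that every point of `X` has a neighborhood containing at most
one point of `A n`. -/
def SigmaDiscrete {X : Type*} [TopologicalSpace X] (A : Set X) : Prop :=
  ∃ f : ℕ → Set X, A = ⋃ n, f n ∧
    ∀ n, ∀ x : X, ∃ U ∈ 𝓝 x, (U ∩ f n).Subsingleton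

namespace StmtAux

variable {X : Type*} [MetricSpace X]

/-- An `ε`-separated set is closed. -/
lemma sep_closed {ε : ℝ} (hε : 0 < ε) {A : Set X}
    (h : ∀ x ∈ A, ∀ y ∈ A, x ≠ y → ε ≤ dist x y) : IsClosed A := by
  refine isClosed_of_closure_subset fun x hx => ?_
  rcases Metric.mem_closure_iff.1 hx (ε / 2) (by linarith) with ⟨a, haA, hxa⟩
  by_cases hxa' : x = a
  · rwa [hxa']
  · exfalso
    have hpos : 0 < dist x a := dist_pos.2 hxa'
    have hd : 0 < min (dist x a) (ε / 2) := lt_min hpos (by linarith)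
    rcases Metric.mem_closure_iff.1 hx _ hd with ⟨b, hbA, hxb⟩
    have hxb1 : dist x b < dist x a := lt_of_lt_of_le hxb (min_le_left _ _)
    have hxb2 : dist x b < ε / 2 := lt_of_lt_of_le hxb (min_le_right _ _)
    have hba : b ≠ a := fun hba => by rw [hba] at hxb1; exact lt_irrefl _ hxb1
    have h1 : ε ≤ dist a b := h a haA b hbA (Ne.symm hba)
    have h2 : dist a b ≤ dist a x + dist x b := dist_triangle a x b
    have h3 : dist a x = dist x a := dist_comm a x
    linarith

/-- Existence of a maximal `ε`-separated subset of any set. -/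
lemma exists_maximal_separated {ε : ℝ} (hε : 0 < ε) (E : Set X) :
    ∃ A : Set X, A ⊆ E ∧ (∀ x ∈ A, ∀ y ∈ A, x ≠ y → ε ≤ dist x y) ∧
      ∀ z ∈ E, ∃ a ∈ A, dist z a < ε := by
  have hchainub : ∀ c ⊆ {S : Set X | S ⊆ E ∧ ∀ x ∈ S, ∀ y ∈ S, x ≠ y → ε ≤ dist x y},
      IsChain (· ⊆ ·) c → ∃ ub ∈ {S : Set X | S ⊆ E ∧
        ∀ x ∈ S, ∀ y ∈ S, x ≠ y → ε ≤ dist x y}, ∀ s ∈ c, s ⊆ ub := by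
    intro c hc hchain
    refine ⟨⋃₀ c, ⟨?_, ?_⟩, fun s hs => subset_sUnion_of_mem hs⟩
    · exact sUnion_subset fun s hs => (hc hs).1
    · rintro x ⟨s, hs, hxs⟩ y ⟨t, ht, hyt⟩ hxy
      rcases hchain.total hs ht with hst | hts
      · exact (hc ht).2 x (hst hxs) y hyt hxy
      · exact (hc hs).2 x hxs y (hts hyt) hxy
  obtain ⟨A, hA⟩ := zorn_subset
    {S : Set X | S ⊆ E ∧ ∀ x ∈ S, ∀ y ∈ S, x ≠ y → ε ≤ dist x y} hchainub
  refine ⟨A, hA.1.1, hA.1.2, fun z hz => ?_⟩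
  by_contra hcon
  push_neg at hcon
  have hzA : z ∉ A := fun hzA => by
    have := hcon z hzA
    rw [dist_self] at this
    linarith
  have hins : insert z A ∈ {S : Set X | S ⊆ E ∧
      ∀ x ∈ S, ∀ y ∈ S, x ≠ y → ε ≤ dist x y} := by
    constructor
    · exact insert_subset hz hA.1.1
    · rintro x (rfl | hx) y (rfl | hy) hxy
      · exact absurd rfl hxy
      · exact hcon y hy
      · rw [dist_comm]; exact hcon x hx
      · exact hA.1.2 x hx y hy hxy
  exact hzA (hA.2 hins (subset_insert z A) (mem_insert z A))

/-- Interior of a finite union of closed sets with empty interior is empty. -/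
lemma interior_union_empty {s t : Set X} (hs : IsClosed s) (hsi : interior s = ∅)
    (hti : interior t = ∅) : interior (s ∪ t) = ∅ := by
  have h1 : interior (s ∪ t) \ s ⊆ interior t := by
    refine interior_maximal ?_ ((isOpen_interior).sdiff hs)
    intro x hx
    rcases interior_subset hx.1 with h | h
    · exact absurd h hx.2
    · exact h
  rw [hti, subset_empty_iff, diff_eq_empty] at h1
  have h2 : interior (s ∪ t) ⊆ interior s := interior_maximal h1 isOpen_interior
  rw [hsi, subset_empty_iff] at h2
  exact h2

end StmtAux

open StmtAux in
/-- A metric space `X` is of the first category (a countable union of sets nowhere dense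
in `X`) iff `X` contains a dense subset which is σ-discrete in `X`, a `Gδ`-set in `X`,
and has no isolated points. -/
theorem stmt_0 {X : Type*} [MetricSpace X] :
    (∃ f : ℕ → Set X, (∀ n, IsNowhereDense (f n)) ∧ (⋃ n, f n) = Set.univ) ↔
    (∃ D : Set X, Dense D ∧ SigmaDiscrete D ∧ IsGδ D ∧
      ∀ x ∈ D, x ∈ closure (D \ {x})) := by
  constructor
  · rintro ⟨f, hf, hfU⟩
    -- the closed nowhere dense layers
    set C : ℕ → Set X := fun n => closure (f n) with hC
    have hCclosed : ∀ n, IsClosed (C n) := fun n => isClosed_closure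
    have hCnwd : ∀ n, interior (C n) = ∅ := fun n => by
      have := (hf n).closure
      rwa [IsNowhereDense, closure_closure] at this
    have hCcover : (⋃ n, C n) = univ := by
      apply eq_univ_of_univ_subset
      rw [← hfU]
      exact iUnion_mono fun n => subset_closure
    -- finite unions of layers
    set F : ℕ → Set X := fun m => ⋃ k ∈ Finset.range m, C k with hF
    have hFsucc : ∀ m, F (m + 1) = C m ∪ F m := fun m => by
      simp only [hF, Finset.range_add_one, Finset.set_biUnion_insert]
    have hFclosed : ∀ m, IsClosed (F m) := by
      intro m
      induction m with
      | zero => simpa [hF] using isClosed_empty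
      | succ m ih => rw [hFsucc]; exact (hCclosed m).union ih
    have hFint : ∀ m, interior (F m) = ∅ := by
      intro m
      induction m with
      | zero => simp [hF]
      | succ m ih => rw [hFsucc]; exact interior_union_empty (hCclosed m) (hCnwd m) ih
    have hFmono : ∀ {k m : ℕ}, k ≤ m → F k ⊆ F m := by
      intro k m hkm x hx
      obtain ⟨i, hi, hxi⟩ := mem_iUnion₂.1 hx
      exact mem_biUnion (Finset.mem_range.2 (lt_of_lt_of_le (Finset.mem_range.1 hi) hkm)) hxi
    have hCF : ∀ {k m : ℕ}, k < m → C k ⊆ F m := by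
      intro k m hkm x hx
      exact mem_biUnion (Finset.mem_range.2 hkm) hx
    -- the layer decomposition: every point is in some E n := C n \ F n, and
    -- points outside F m land in E n with n ≥ m
    set E : ℕ → Set X := fun n => C n \ F n with hE
    have hlayer : ∀ (y : X) (m : ℕ), y ∉ F m → ∃ n, m ≤ n ∧ y ∈ E n := by
      classical
      intro y m hy
      have hex : ∃ n, y ∈ C n := by
        have : y ∈ ⋃ n, C n := hCcover ▸ mem_univ y
        exact mem_iUnion.1 this
      set n := Nat.find hex with hn
      refine ⟨n, ?_, Nat.find_spec hex, ?_⟩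
      · by_contra hcon
        push_neg at hcon
        exact hy (hFmono (by omega : n + 1 ≤ m) (hCF (Nat.lt_succ_self n) (Nat.find_spec hex)))
      · intro hyF
        rcases mem_iUnion₂.1 hyF with ⟨k, hk, hyk⟩
        simp only [Finset.mem_range, Finset.mem_coe] at hk
        exact absurd hyk (Nat.find_min hex hk)
    -- maximal separated subsets of the layers
    have hεpos : ∀ n : ℕ, (0 : ℝ) < 1 / (n + 1) := fun n => by positivity
    choose A hAE hAsep hAnet using fun n =>
      exists_maximal_separated (hεpos n) (E n)
    set D : Set X := ⋃ n, A n with hD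
    -- X has no isolated points; better: every ball contains a point of D close by
    have hDnear : ∀ (x : X) (r : ℝ), 0 < r → ∃ a ∈ D, dist x a < r := by
      intro x r hr
      obtain ⟨m, hm⟩ := exists_nat_one_div_lt (show (0:ℝ) < r / 2 by linarith)
      -- find a point of ball x (r/2) outside F m
      have hball : ¬ Metric.ball x (r / 2) ⊆ F m := by
        intro hsub
        have : Metric.ball x (r / 2) ⊆ interior (F m) :=
          interior_maximal hsub Metric.isOpen_ball
        rw [hFint m, subset_empty_iff] at this
        exact (Metric.ball_eq_empty.1 this).not_gt (by linarith)
      rcases not_subset.1 hball with ⟨y, hyb, hyF⟩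
      obtain ⟨n, hmn, hyE⟩ := hlayer y m hyF
      obtain ⟨a, haA, hya⟩ := hAnet n y hyE
      refine ⟨a, mem_iUnion.2 ⟨n, haA⟩, ?_⟩
      have h1 : (1 : ℝ) / (n + 1) ≤ 1 / (m + 1) := by
        apply one_div_le_one_div_of_le (by positivity)
        have : (m : ℝ) ≤ n := Nat.cast_le.2 hmn
        linarith
      have h2 : dist x y < r / 2 := Metric.mem_ball'.1 hyb
      calc dist x a ≤ dist x y + dist y a := dist_triangle x y a
        _ < r / 2 + 1 / (n + 1) := by linarith
        _ ≤ r / 2 + 1 / (m + 1) := by linarith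
        _ < r / 2 + r / 2 := by linarith
        _ = r := by ring
    have hDdense : Dense D := by
      rw [Metric.dense_iff]
      intro x r hr
      obtain ⟨a, haD, hxa⟩ := hDnear x r hr
      exact ⟨a, Metric.mem_ball.2 (by rwa [dist_comm]), haD⟩
    refine ⟨D, hDdense, ⟨A, rfl, ?_⟩, ?_, ?_⟩
    · -- σ-discreteness
      intro n x
      refine ⟨Metric.ball x (1 / (2 * (n + 1))), Metric.ball_mem_nhds x (by positivity), ?_⟩
      rintro a ⟨ha, haA⟩ b ⟨hb, hbA⟩
      by_contra hab
      have := hAsep n a haA b hbA hab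
      have h1 : dist a b ≤ dist a x + dist x b := dist_triangle a x b
      have h2 : dist a x < 1 / (2 * (n + 1)) := Metric.mem_ball.1 ha
      have h3 : dist x b < 1 / (2 * (n + 1)) := Metric.mem_ball'.1 hb
      have h4 : (1 : ℝ) / (2 * (n + 1)) = 1 / (n + 1) / 2 := by
        rw [div_div]
        ring_nf
      linarith
    · -- Gδ
      have hAclosed : ∀ n, IsClosed (A n) := fun n => sep_closed (hεpos n) (hAsep n)
      have key : D = ⋂ m, ((⋃ k ∈ Finset.range (m + 1), A k) ∪ (F (m + 1))ᶜ) := by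
        apply Subset.antisymm
        · intro x hx
          rcases mem_iUnion.1 hx with ⟨n, hxn⟩
          refine mem_iInter.2 fun m => ?_
          by_cases hnm : n ≤ m
          · exact Or.inl (mem_biUnion (Finset.mem_range.2 (by omega)) hxn)
          · refine Or.inr fun hxF => ?_
            have : x ∈ E n := hAE n hxn
            exact this.2 (hFmono (by omega : m + 1 ≤ n) hxF)
        · intro x hx
          have hex : ∃ n, x ∈ C n := by
            have : x ∈ ⋃ n, C n := hCcover ▸ mem_univ x
            exact mem_iUnion.1 this
          obtain ⟨m, hm⟩ := hex
          have := mem_iInter.1 hx m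
          rcases this with h | h
          · rcases mem_iUnion₂.1 h with ⟨k, _, hk⟩
            exact mem_iUnion.2 ⟨k, hk⟩
          · exact absurd (hCF (Nat.lt_succ_self m) hm) h
      rw [key]
      refine IsGδ.iInter fun m => IsGδ.union ?_ ?_
      · exact IsClosed.isGδ (isClosed_biUnion_finset fun k _ => hAclosed k)
      · exact (hFclosed (m + 1)).isOpen_compl.isGδ
    · -- no isolated points
      intro x hxD
      rw [Metric.mem_closure_iff]
      intro r hr
      -- first find y ≠ x close to x
      have hxC : ∃ m, x ∈ C m := by
        have : x ∈ ⋃ n, C n := hCcover ▸ mem_univ x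
        exact mem_iUnion.1 this
      obtain ⟨m, hm⟩ := hxC
      have hball : ¬ Metric.ball x (r / 2) ⊆ F (m + 1) := by
        intro hsub
        have : Metric.ball x (r / 2) ⊆ interior (F (m + 1)) :=
          interior_maximal hsub Metric.isOpen_ball
        rw [hFint (m + 1), subset_empty_iff] at this
        exact (Metric.ball_eq_empty.1 this).not_gt (by linarith)
      rcases not_subset.1 hball with ⟨y, hyb, hyF⟩
      have hyx : y ≠ x := fun h => hyF (h ▸ hCF (Nat.lt_succ_self m) hm)
      have hdyx : 0 < dist x y := dist_pos.2 (Ne.symm hyx)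
      have hdxy : dist x y < r / 2 := Metric.mem_ball'.1 hyb
      obtain ⟨a, haD, hya⟩ := hDnear y (min (dist x y) (r / 2)) (lt_min hdyx (by linarith))
      have hax : a ≠ x := by
        intro h
        rw [h] at hya
        have : dist y x < dist x y := lt_of_lt_of_le hya (min_le_left _ _)
        rw [dist_comm] at this
        exact lt_irrefl _ this
      refine ⟨a, ⟨haD, by simpa using hax⟩, ?_⟩
      have h1 : dist y a < r / 2 := lt_of_lt_of_le hya (min_le_right _ _)
      calc dist x a ≤ dist x y + dist y a := dist_triangle x y a
        _ < r / 2 + r / 2 := by linarith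
        _ = r := by ring
  · rintro ⟨D, hDdense, ⟨g, hDg, hgdisc⟩, hDGδ, hDiso⟩
    -- each g n is closed
    have hgclosed : ∀ n, IsClosed (g n) := by
      intro n
      refine isClosed_of_closure_subset fun x hx => ?_
      obtain ⟨U, hU, hsub⟩ := hgdisc n x
      obtain ⟨a, haU, hag⟩ := mem_closure_iff_nhds.1 hx U hU
      by_cases hxa : x = a
      · rwa [hxa]
      · exfalso
        have hU' : U ∩ {a}ᶜ ∈ 𝓝 x := Filter.inter_mem hU (compl_singleton_mem_nhds hxa)
        obtain ⟨b, ⟨hbU, hba⟩, hbg⟩ := mem_closure_iff_nhds.1 hx _ hU'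
        exact hba (hsub ⟨hbU, hbg⟩ ⟨haU, hag⟩)
    -- each g n is nowhere dense
    have hgnwd : ∀ n, IsNowhereDense (g n) := by
      intro n
      rw [(hgclosed n).isNowhereDense_iff]
      by_contra hcon
      obtain ⟨x, hx⟩ := nonempty_iff_ne_empty.2 hcon
      have hxg : x ∈ g n := interior_subset hx
      have hxD : x ∈ D := hDg ▸ mem_iUnion.2 ⟨n, hxg⟩
      obtain ⟨U, hU, hsub⟩ := hgdisc n x
      have hU' : U ∩ interior (g n) ∈ 𝓝 x :=
        Filter.inter_mem hU (isOpen_interior.mem_nhds hx)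
      obtain ⟨y, ⟨hyU, hyint⟩, hyD, hyx⟩ := mem_closure_iff_nhds.1 (hDiso x hxD) _ hU'
      exact hyx (mem_singleton_iff.2 (hsub ⟨hyU, interior_subset hyint⟩ ⟨mem_of_mem_nhds hU, hxg⟩))
    -- D is meagre
    have h1 : IsMeagre D := by
      rw [isMeagre_iff_countable_union_isNowhereDense]
      refine ⟨range g, ?_, countable_range g, ?_⟩
      · rintro t ⟨n, rfl⟩; exact hgnwd n
      · rw [sUnion_range, ← hDg]
    -- Dᶜ is meagre
    have h2 : IsMeagre Dᶜ := by
      rw [IsMeagre, compl_compl]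
      exact residual_of_dense_Gδ hDGδ hDdense
    -- univ is meagre
    have h3 : IsMeagre (univ : Set X) := by
      have heq : (univ : Set X) = D ∪ Dᶜ := (union_compl_self D).symm
      rw [heq, IsMeagre, compl_union]
      exact Filter.inter_mem h1 h2
    rw [isMeagre_iff_countable_union_isNowhereDense] at h3
    obtain ⟨S, hSnwd, hScnt, hScov⟩ := h3
    obtain ⟨F, hFr⟩ := (hScnt.insert ∅).exists_eq_range (insert_nonempty _ _)
    refine ⟨F, fun n => ?_, ?_⟩
    · have : F n ∈ insert (∅ : Set X) S := hFr ▸ mem_range_self n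
      rcases this with h | h
      · rw [h]; exact isNowhereDense_empty
      · exact hSnwd _ h
    · apply eq_univ_of_univ_subset
      calc univ ⊆ ⋃₀ S := hScov
        _ ⊆ ⋃₀ insert ∅ S := sUnion_mono (subset_insert _ _)
        _ = ⋃ n, F n := by rw [hFr, sUnion_range]
end

section
/- Every metrizable space without isolated points in which every σ-discrete subset is a Gδ-set is of the first category in itself. -/
open Set Topology Metric

/-- Existence of a maximal ε-separated set in a metric space. -/
lemma exists_maximal_separated {X : Type*} [MetricSpace X] (ε : ℝ) (hε : 0 < ε) :
    ∃ D : Set X, (∀ x ∈ D, ∀ y ∈ D, x ≠ y → ε ≤ dist x y) ∧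
      ∀ x : X, ∃ y ∈ D, dist x y < ε := by
  set S : Set (Set X) := {s | ∀ x ∈ s, ∀ y ∈ s, x ≠ y → ε ≤ dist x y} with hS
  have hub : ∀ c ⊆ S, IsChain (· ⊆ ·) c → ∃ ub ∈ S, ∀ s ∈ c, s ⊆ ub := by
    intro c hc hchain
    refine ⟨⋃₀ c, ?_, fun s hs => subset_sUnion_of_mem hs⟩
    rintro x ⟨s, hs, hxs⟩ y ⟨t, ht, hyt⟩ hxy
    rcases hchain.total hs ht with h | h
    · exact hc ht x (h hxs) y hyt hxy
    · exact hc hs x hxs y (h hyt) hxy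
  obtain ⟨m, hm⟩ := zorn_subset S hub
  refine ⟨m, hm.prop, fun x => ?_⟩
  by_contra h
  push_neg at h
  have hxm : x ∉ m := fun hx => by
    have := h x hx
    rw [dist_self] at this
    exact absurd this (not_le.mpr hε)
  have hmem : insert x m ∈ S := by
    intro a ha b hb hab
    rcases ha with rfl | ha
    · rcases hb with rfl | hb
      · exact absurd rfl hab
      · exact h b hb
    · rcases hb with rfl | hb
      · rw [dist_comm]; exact h a ha
      · exact hm.prop a ha b hb hab
  have := hm.2 hmem (subset_insert x m)
  exact hxm (this (mem_insert x m))

/-- Every metrizable space without isolated points in which every σ-discrete subset is a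
`Gδ`-set (a `Λ`-set) is of the first category in itself. -/
theorem stmt_1 {X : Type*} [TopologicalSpace X] [TopologicalSpace.MetrizableSpace X]
    (hni : ∀ x : X, ¬ IsOpen ({x} : Set X))
    (hΛ : ∀ A : Set X, SigmaDiscrete A → IsGδ A) :
    ∃ f : ℕ → Set X, (∀ n, IsNowhereDense (f n)) ∧ (⋃ n, f n) = Set.univ := by
  letI : MetricSpace X := TopologicalSpace.metrizableSpaceMetric X
  have hε : ∀ n : ℕ, (0:ℝ) < 1 / (n+1) := fun n => by positivity
  choose D hsep hdense using fun n : ℕ =>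
    exists_maximal_separated (X := X) (1/((n:ℝ)+1)) (hε n)
  -- σ-discreteness of the union of the `D n`
  have hσ : SigmaDiscrete (⋃ n, D n) := by
    refine ⟨D, rfl, fun n x => ?_⟩
    refine ⟨Metric.ball x (1/((n:ℝ)+1)/2), Metric.ball_mem_nhds x (by positivity), ?_⟩
    rintro a ⟨ha, haD⟩ b ⟨hb, hbD⟩
    by_contra hab
    have h1 := hsep n a haD b hbD hab
    have h2 : dist a b ≤ dist a x + dist x b := dist_triangle a x b
    rw [Metric.mem_ball] at ha hb
    rw [dist_comm] at hb
    linarith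
  obtain ⟨U, hUopen, hUeq⟩ := (hΛ _ hσ).eq_iInter_nat
  -- the union of the `D n` is dense
  have hDdense : Dense (⋃ n, D n) := by
    rw [Metric.dense_iff]
    intro x r hr
    obtain ⟨n, hn⟩ := exists_nat_one_div_lt hr
    obtain ⟨y, hyD, hxy⟩ := hdense n x
    exact ⟨y, Metric.mem_ball.mpr (by rw [dist_comm]; linarith), mem_iUnion.mpr ⟨n, hyD⟩⟩
  -- each `D n` is closed
  have hDclosed : ∀ n, IsClosed (D n) := by
    intro n
    rw [← closure_subset_iff_isClosed]
    intro x hx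
    by_contra hxD
    obtain ⟨y, hyD, hxy⟩ := Metric.mem_closure_iff.mp hx (1/((n:ℝ)+1)/2) (by positivity)
    have hxney : x ≠ y := fun h => hxD (h ▸ hyD)
    have hdxy : 0 < dist x y := dist_pos.mpr hxney
    obtain ⟨z, hzD, hxz⟩ := Metric.mem_closure_iff.mp hx
      (min (dist x y) (1/((n:ℝ)+1)/2)) (lt_min hdxy (by positivity))
    have hzy : z ≠ y := fun h => by
      rw [h] at hxz
      exact absurd (min_le_left _ _) (not_le.mpr hxz)
    have := hsep n z hzD y hyD hzy
    have h3 : dist z y ≤ dist z x + dist x y := dist_triangle z x y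
    have h4 : dist x z < 1/((n:ℝ)+1)/2 := lt_of_lt_of_le hxz (min_le_right _ _)
    rw [dist_comm] at h4
    linarith
  -- each `D n` has empty interior
  have hDint : ∀ n, interior (D n) = ∅ := by
    intro n
    by_contra hne
    obtain ⟨x, hx⟩ := nonempty_iff_ne_empty.mpr hne
    obtain ⟨r, hr, hball⟩ := Metric.isOpen_iff.mp isOpen_interior x hx
    have hxD : x ∈ D n := interior_subset hx
    set r' := min r (1/((n:ℝ)+1)/2) with hr'
    have hr'0 : 0 < r' := lt_min hr (by positivity)
    have hball' : Metric.ball x r' ⊆ D n :=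
      fun y hy => interior_subset (hball (Metric.ball_subset_ball (min_le_left _ _) hy))
    have hsingle : Metric.ball x r' = {x} := by
      apply Subset.antisymm
      · intro y hy
        have hyD : y ∈ D n := hball' hy
        by_contra hne'
        have := hsep n y hyD x hxD (by simpa using hne')
        rw [Metric.mem_ball] at hy
        have h5 : dist y x < 1/((n:ℝ)+1)/2 := lt_of_lt_of_le hy (min_le_right _ _)
        have h6 : (0:ℝ) < 1/((n:ℝ)+1) := hε n
        linarith
      · exact singleton_subset_iff.mpr (Metric.mem_ball_self hr'0)
    exact hni x (hsingle ▸ Metric.isOpen_ball)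
  have hNWD_D : ∀ n, IsNowhereDense (D n) := fun n => by
    show interior (closure (D n)) = ∅
    rw [(hDclosed n).closure_eq]
    exact hDint n
  have hNWD_F : ∀ k, IsNowhereDense ((U k)ᶜ) := fun k => by
    have hUk : Dense (U k) := hDdense.mono (by
      intro x hx
      rw [hUeq] at hx
      exact mem_iInter.mp hx k)
    show interior (closure (U k)ᶜ) = ∅
    rw [IsClosed.closure_eq (hUopen k).isClosed_compl, interior_compl,
      hUk.closure_eq, compl_univ]
  refine ⟨fun n => if n % 2 = 0 then D (n/2) else (U (n/2))ᶜ, fun n => ?_, ?_⟩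
  · by_cases h : n % 2 = 0 <;> simp [h, hNWD_D, hNWD_F]
  · ext x
    simp only [mem_iUnion, mem_univ, iff_true]
    by_cases hx : x ∈ ⋃ n, D n
    · obtain ⟨n, hn⟩ := mem_iUnion.mp hx
      refine ⟨2*n, ?_⟩
      have h1 : (2*n) % 2 = 0 := by omega
      have h2 : 2*n/2 = n := by omega
      simp [h1, h2, hn]
    · rw [hUeq] at hx
      obtain ⟨k, hk⟩ := by simpa [mem_iInter] using hx
      refine ⟨2*k+1, ?_⟩
      have h1 : (2*k+1) % 2 = 1 := by omega
      have h2 : (2*k+1)/2 = k := by omega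
      simp [h1, h2, hk]
end

section
/- If a metrizable space X of the first category contains a subspace homeomorphic to the Cantor set 2^ω, then X is not densely homogeneous; that is, either X has no dense σ-discrete subset, or there exist two σ-discrete dense subsets A and B of X such that no homeomorphism of X onto itself maps A onto B. -/
open Set Topology

lemma exists_B {X : Type*} [MetricSpace X] (G : ℕ → Set X)
    (hGe : ∀ n, interior (G n) = ∅) (hGm : Monotone G)
    (fA : ℕ → Set X) (hdense : Dense (⋃ m, fA m))
    (hdisc : ∀ m (x : X), ∃ ε > 0, (Metric.ball x ε ∩ fA m).Subsingleton) :
    ∃ B : Set X, Dense B ∧ SigmaDiscrete B ∧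
      ∀ n (x : X), x ∉ closure ((B ∩ G n) \ {x}) := by
  choose s hs hsub using hdisc
  have hbex : ∀ (m k : ℕ) (a : X), ∃ y : X,
      dist y a < min (s m a / 3) (1 / (k + 1 : ℝ)) ∧ y ∉ G (m + k) := by
    intro m k a
    have hd : Dense (G (m + k))ᶜ := interior_eq_empty_iff_dense_compl.mp (hGe (m + k))
    have hr : 0 < min (s m a / 3) (1 / (k + 1 : ℝ)) :=
      lt_min (by have := hs m a; positivity) (by positivity)
    obtain ⟨y, hy1, hy2⟩ := hd.inter_open_nonempty (Metric.ball a _) Metric.isOpen_ball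
      ⟨a, Metric.mem_ball_self hr⟩
    exact ⟨y, Metric.mem_ball.mp hy1, hy2⟩
  choose b hb1 hb2 using hbex
  set B : Set X := ⋃ m, ⋃ k, b m k '' fA m with hBdef
  -- key subsingleton property of each piece
  have key : ∀ (m k : ℕ) (x : X), ∃ ε > 0, (Metric.ball x ε ∩ (b m k '' fA m)).Subsingleton := by
    intro m k x
    refine ⟨s m x / 7, by have := hs m x; positivity, ?_⟩
    rintro p ⟨hpball, a, ha, rfl⟩ q ⟨hqball, a', ha', rfl⟩
    rcases eq_or_ne a a' with rfl | hne
    · rfl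
    · exfalso
      have h1 : dist (b m k a) a < s m a / 3 :=
        lt_of_lt_of_le (hb1 m k a) (min_le_left _ _)
      have h2 : dist (b m k a') a' < s m a' / 3 :=
        lt_of_lt_of_le (hb1 m k a') (min_le_left _ _)
      have hp : dist (b m k a) x < s m x / 7 := Metric.mem_ball.mp hpball
      have hq : dist (b m k a') x < s m x / 7 := Metric.mem_ball.mp hqball
      have hsa : s m a ≤ dist a' a := by
        by_contra hlt
        push_neg at hlt
        exact hne ((hsub m a ⟨Metric.mem_ball.mpr hlt, ha'⟩
          ⟨Metric.mem_ball_self (hs m a), ha⟩)).symm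
      have hsa' : s m a' ≤ dist a a' := by
        by_contra hlt
        push_neg at hlt
        exact hne (hsub m a' ⟨Metric.mem_ball.mpr hlt, ha⟩
          ⟨Metric.mem_ball_self (hs m a'), ha'⟩)
      have htr0 : dist (b m k a) (b m k a') ≤ dist (b m k a) x + dist x (b m k a') :=
        dist_triangle _ _ _
      have htr : dist a a' ≤ dist a (b m k a) + dist (b m k a) (b m k a') + dist (b m k a') a' :=
        dist_triangle4 _ _ _ _
      have hc1 : dist a (b m k a) = dist (b m k a) a := dist_comm _ _
      have hc2 : dist x (b m k a') = dist (b m k a') x := dist_comm _ _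
      have hc3 : dist a' a = dist a a' := dist_comm _ _
      have hdd : dist a a' < 6 * (s m x / 7) := by linarith
      have hax : dist a x ≤ dist a (b m k a) + dist (b m k a) x := dist_triangle _ _ _
      have ha'x : dist a' x ≤ dist a' (b m k a') + dist (b m k a') x := dist_triangle _ _ _
      have hc4 : dist a' (b m k a') = dist (b m k a') a' := dist_comm _ _
      have hmem1 : a ∈ Metric.ball x (s m x) ∩ fA m :=
        ⟨Metric.mem_ball.mpr (by have := hs m x; linarith), ha⟩
      have hmem2 : a' ∈ Metric.ball x (s m x) ∩ fA m :=
        ⟨Metric.mem_ball.mpr (by have := hs m x; linarith), ha'⟩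
      exact hne (hsub m x hmem1 hmem2)
  refine ⟨B, ?_, ?_, ?_⟩
  · -- dense
    rw [Metric.dense_iff]
    intro x r hr
    obtain ⟨a, haball, ham⟩ := Metric.dense_iff.mp hdense x (r / 2) (by positivity)
    obtain ⟨m, ham⟩ := mem_iUnion.mp ham
    obtain ⟨k, hk⟩ := exists_nat_one_div_lt (show (0:ℝ) < r / 2 by positivity)
    refine ⟨b m k a, Metric.mem_ball.mpr ?_, mem_iUnion.mpr ⟨m, mem_iUnion.mpr ⟨k, ⟨a, ham, rfl⟩⟩⟩⟩
    have h1 : dist (b m k a) a < 1 / (k + 1 : ℝ) :=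
      lt_of_lt_of_le (hb1 m k a) (min_le_right _ _)
    have h2 : dist a x < r / 2 := Metric.mem_ball.mp haball
    calc dist (b m k a) x ≤ dist (b m k a) a + dist a x := dist_triangle _ _ _
      _ < 1 / (k + 1 : ℝ) + r / 2 := by linarith
      _ < r := by linarith
  · -- sigma discrete
    refine ⟨fun j => b (Nat.unpair j).1 (Nat.unpair j).2 '' fA (Nat.unpair j).1, ?_, ?_⟩
    · ext y
      simp only [hBdef, mem_iUnion]
      constructor
      · rintro ⟨m, k, hy⟩
        exact ⟨Nat.pair m k, by rw [Nat.unpair_pair]; exact hy⟩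
      · rintro ⟨j, hy⟩
        exact ⟨(Nat.unpair j).1, (Nat.unpair j).2, hy⟩
    · intro j x
      obtain ⟨ε, hε, hsub'⟩ := key (Nat.unpair j).1 (Nat.unpair j).2 x
      exact ⟨Metric.ball x ε, Metric.ball_mem_nhds x hε, hsub'⟩
  · -- no accumulation points of B ∩ G n
    intro n x hx
    have hfin : ∀ (t : Finset (ℕ × ℕ)), ∃ ε > 0, ∀ p ∈ t,
        (Metric.ball x ε ∩ (b p.1 p.2 '' fA p.1)).Subsingleton := by
      intro t
      induction t using Finset.induction_on with
      | empty => exact ⟨1, one_pos, by simp⟩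
      | @insert p t hp ih =>
        obtain ⟨ε, hε, hall⟩ := ih
        obtain ⟨ε', hε', h'⟩ := key p.1 p.2 x
        refine ⟨min ε ε', lt_min hε hε', ?_⟩
        intro q hq
        rcases Finset.mem_insert.mp hq with rfl | hq
        · exact h'.anti (inter_subset_inter_left _ (Metric.ball_subset_ball (min_le_right _ _)))
        · exact (hall q hq).anti (inter_subset_inter_left _ (Metric.ball_subset_ball (min_le_left _ _)))
    obtain ⟨ε, hε, hall⟩ := hfin (Finset.range n ×ˢ Finset.range n)
    have hFfin : (Metric.ball x ε ∩ (B ∩ G n)).Finite := by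
      apply Set.Finite.subset (Set.Finite.biUnion
        ((Finset.range n ×ˢ Finset.range n) : Finset (ℕ × ℕ)).finite_toSet
        (fun p hp => ((hall p (Finset.mem_coe.mp hp)).finite)))
      rintro y ⟨hyb, hyB, hyG⟩
      obtain ⟨m, hm⟩ := mem_iUnion.mp hyB
      obtain ⟨k, hk⟩ := mem_iUnion.mp hm
      obtain ⟨a, ha, rfl⟩ := hk
      have hmk : m + k < n := by
        by_contra hge
        push_neg at hge
        exact hb2 m k a (hGm hge hyG)
      refine mem_iUnion₂.mpr ⟨(m, k), ?_, ⟨hyb, ⟨a, ha, rfl⟩⟩⟩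
      simp only [Finset.coe_product, Finset.coe_range, mem_prod, mem_Iio]
      omega
    set F' : Set X := (Metric.ball x ε ∩ (B ∩ G n)) \ {x} with hF'def
    have hF'fin : F'.Finite := hFfin.subset diff_subset
    have hU'open : IsOpen (Metric.ball x ε \ F') := Metric.isOpen_ball.sdiff hF'fin.isClosed
    have hxU' : x ∈ Metric.ball x ε \ F' :=
      ⟨Metric.mem_ball_self hε, fun h => h.2 rfl⟩
    obtain ⟨y, hyU', hyS⟩ := mem_closure_iff.mp hx _ hU'open hxU'
    exact hyU'.2 ⟨⟨hyU'.1, hyS.1⟩, hyS.2⟩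

/-- If a metrizable space `X` of the first category contains a subspace homeomorphic to
the Cantor set `2^ω`, then `X` is not densely homogeneous: either `X` has no dense
σ-discrete subset, or there are two σ-discrete dense subsets `A`, `B` of `X` such that
no self-homeomorphism of `X` maps `A` onto `B`. -/
theorem stmt_3 {X : Type*} [TopologicalSpace X] [TopologicalSpace.MetrizableSpace X]
    (hmeager : ∃ f : ℕ → Set X, (∀ n, IsNowhereDense (f n)) ∧ (⋃ n, f n) = Set.univ)
    (hK : ∃ K : Set X, Nonempty (↥K ≃ₜ (ℕ → Bool))) :
    (¬ ∃ A : Set X, Dense A ∧ SigmaDiscrete A) ∨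
    (∃ A B : Set X, Dense A ∧ SigmaDiscrete A ∧ Dense B ∧ SigmaDiscrete B ∧
      ∀ h : X ≃ₜ X, h '' A ≠ B) := by
  by_cases hA0 : ∃ A : Set X, Dense A ∧ SigmaDiscrete A
  swap
  · exact Or.inl hA0
  right
  obtain ⟨f, hnwd, hcov⟩ := hmeager
  obtain ⟨K, ⟨e⟩⟩ := hK
  obtain ⟨A₀, hA₀d, fA, hA₀eq, hA₀disc⟩ := hA0
  letI : MetricSpace X := TopologicalSpace.metrizableSpaceMetric X
  -- the increasing closed nowhere dense cover
  set G : ℕ → Set X := fun n => Nat.rec (closure (f 0)) (fun m Gm => Gm ∪ closure (f (m + 1))) n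
    with hGdef
  have hGsucc : ∀ m, G (m + 1) = G m ∪ closure (f (m + 1)) := fun m => rfl
  have hGcl : ∀ n, IsClosed (G n) := by
    intro n
    induction n with
    | zero => exact isClosed_closure
    | succ m ih => exact ih.union isClosed_closure
  have hGe : ∀ n, interior (G n) = ∅ := by
    intro n
    induction n with
    | zero => exact hnwd 0
    | succ m ih =>
      rw [hGsucc, interior_eq_empty_iff_dense_compl, compl_union]
      have h1 : Dense (G m)ᶜ := interior_eq_empty_iff_dense_compl.mp ih
      have h2 : Dense (closure (f (m + 1)))ᶜ :=
        interior_eq_empty_iff_dense_compl.mp (hnwd (m + 1))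
      exact Dense.inter_of_isOpen_left h1 h2 (hGcl m).isOpen_compl
  have hGm : Monotone G := monotone_nat_of_le_succ fun n => by
    rw [hGsucc]; exact subset_union_left
  have hfG : ∀ n, f n ⊆ G n := by
    intro n
    cases n with
    | zero => exact subset_closure
    | succ m => rw [hGsucc]; exact subset_closure.trans subset_union_right
  have hGcov : ∀ x : X, ∃ n, x ∈ G n := by
    intro x
    have : x ∈ ⋃ n, f n := by rw [hcov]; trivial
    obtain ⟨n, hn⟩ := mem_iUnion.mp this
    exact ⟨n, hfG n hn⟩
  -- discreteness of the pieces of A₀ in metric form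
  have hdisc : ∀ m (x : X), ∃ ε > 0, (Metric.ball x ε ∩ fA m).Subsingleton := by
    intro m x
    obtain ⟨U, hU, hUs⟩ := hA₀disc m x
    obtain ⟨ε, hε, hball⟩ := Metric.mem_nhds_iff.mp hU
    exact ⟨ε, hε, hUs.anti (inter_subset_inter_left _ hball)⟩
  have hdense : Dense (⋃ m, fA m) := hA₀eq ▸ hA₀d
  obtain ⟨B, hBd, hBsd, hBnoacc⟩ := exists_B G hGe hGm fA hdense hdisc
  -- the countable dense subset of the Cantor set
  set Y := (ℕ → Bool)
  set φ : Y → X := fun y => ((e.symm y : K) : X) with hφdef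
  have hφc : Continuous φ := continuous_subtype_val.comp e.symm.continuous
  have hφinj : Function.Injective φ := Subtype.coe_injective.comp e.symm.injective
  obtain ⟨T, hTc, hTd⟩ := TopologicalSpace.exists_countable_dense Y
  have hTne : T.Nonempty := hTd.nonempty
  set D : Set X := φ '' T with hDdef
  obtain ⟨dseq, hdseq⟩ := (hTc.image φ).exists_eq_range (hTne.image φ)
  set A : Set X := A₀ ∪ D with hAdef
  refine ⟨A, B, hA₀d.mono subset_union_left, ?_, hBd, hBsd, ?_⟩
  · -- A is sigma-discrete
    refine ⟨fun j => if j % 2 = 0 then fA (j / 2) else {dseq (j / 2)}, ?_, ?_⟩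
    · ext x
      constructor
      · rintro (hx | hx)
        · rw [hA₀eq] at hx
          obtain ⟨m, hm⟩ := mem_iUnion.mp hx
          refine mem_iUnion.mpr ⟨2 * m, ?_⟩
          have h1 : (2 * m) % 2 = 0 := by omega
          have h2 : (2 * m) / 2 = m := by omega
          show x ∈ if (2 * m) % 2 = 0 then fA ((2 * m) / 2) else {dseq ((2 * m) / 2)}
          rw [if_pos h1, h2]; exact hm
        · rw [hDdef, hdseq] at hx
          obtain ⟨i, hi⟩ := hx
          refine mem_iUnion.mpr ⟨2 * i + 1, ?_⟩
          have h1 : ¬ ((2 * i + 1) % 2 = 0) := by omega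
          have h2 : (2 * i + 1) / 2 = i := by omega
          show x ∈ if (2 * i + 1) % 2 = 0 then fA ((2 * i + 1) / 2) else {dseq ((2 * i + 1) / 2)}
          rw [if_neg h1, h2]
          exact hi.symm
      · intro hx
        obtain ⟨j, hj⟩ := mem_iUnion.mp hx
        by_cases hp : j % 2 = 0
        · rw [if_pos hp] at hj
          exact Or.inl (hA₀eq ▸ mem_iUnion.mpr ⟨j / 2, hj⟩)
        · rw [if_neg hp] at hj
          refine Or.inr ?_
          rw [hDdef, hdseq]
          exact ⟨j / 2, hj.symm⟩
    · intro j x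
      by_cases hp : j % 2 = 0
      · obtain ⟨U, hU, hUs⟩ := hA₀disc (j / 2) x
        refine ⟨U, hU, ?_⟩
        show (U ∩ if j % 2 = 0 then fA (j / 2) else {dseq (j / 2)}).Subsingleton
        rw [if_pos hp]
        exact hUs
      · refine ⟨univ, Filter.univ_mem, ?_⟩
        show (univ ∩ if j % 2 = 0 then fA (j / 2) else {dseq (j / 2)}).Subsingleton
        rw [if_neg hp, univ_inter]
        exact subsingleton_singleton
  · -- no homeomorphism maps A onto B
    intro h heq
    set E : ℕ → Set Y := fun n => φ ⁻¹' (⇑h ⁻¹' G n) with hEdef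
    have hEcl : ∀ n, IsClosed (E n) := fun n =>
      (((hGcl n).preimage h.continuous).preimage hφc)
    have hEcov : ⋃ n, E n = univ := by
      ext y
      simp only [mem_iUnion, mem_univ, iff_true]
      obtain ⟨n, hn⟩ := hGcov (h (φ y))
      exact ⟨n, hn⟩
    obtain ⟨n, hVne⟩ := nonempty_interior_of_iUnion_of_closed hEcl hEcov
    obtain ⟨t, htV, htT⟩ := hTd.inter_open_nonempty _ isOpen_interior hVne
    set x₀ : X := φ t with hx₀def
    -- x₀ is an accumulation point of A ∩ h⁻¹(G n)
    have hacc : x₀ ∈ closure ((A ∩ (⇑h ⁻¹' G n)) \ {x₀}) := by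
      rw [mem_closure_iff]
      intro O hO hxO
      have hWopen : IsOpen (φ ⁻¹' O ∩ interior (E n)) :=
        (hO.preimage hφc).inter isOpen_interior
      have htW : t ∈ φ ⁻¹' O ∩ interior (E n) := ⟨hxO, htV⟩
      -- find a point of the open set different from t
      have hflip : ∃ t' : Y, t' ∈ (φ ⁻¹' O ∩ interior (E n)) ∧ t' ≠ t := by
        have htend : Filter.Tendsto (fun m => Function.update t m (!(t m)))
            Filter.atTop (𝓝 t) := by
          rw [tendsto_pi_nhds]
          intro i
          apply Filter.Tendsto.congr' _ tendsto_const_nhds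
          filter_upwards [Filter.eventually_ne_atTop i] with m hm
          exact (Function.update_of_ne (Ne.symm hm) _ _).symm
        obtain ⟨m, hm⟩ := (htend.eventually (hWopen.mem_nhds htW)).exists
        refine ⟨_, hm, ?_⟩
        intro hcontra
        have : Function.update t m (!(t m)) m = t m := by rw [hcontra]
        rw [Function.update_self] at this
        exact Bool.not_ne_self (t m) this
      obtain ⟨t₁, ht₁W, ht₁ne⟩ := hflip
      have hW'open : IsOpen ((φ ⁻¹' O ∩ interior (E n)) \ {t}) :=
        hWopen.sdiff isClosed_singleton
      obtain ⟨t', ht'W', ht'T⟩ := hTd.inter_open_nonempty _ hW'open ⟨t₁, ht₁W, ht₁ne⟩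
      refine ⟨φ t', ht'W'.1.1, ⟨⟨Or.inr ⟨t', ht'T, rfl⟩, ?_⟩, ?_⟩⟩
      · exact interior_subset (s := E n) ht'W'.1.2
      · simp only [mem_singleton_iff]
        exact fun hc => ht'W'.2 (hφinj hc)
    -- transport along h and contradict
    have himg : ⇑h '' ((A ∩ (⇑h ⁻¹' G n)) \ {x₀}) = (B ∩ G n) \ {h x₀} := by
      rw [Set.image_diff h.injective, Set.image_inter h.injective,
        Set.image_preimage_eq _ h.surjective, Set.image_singleton, heq]
    have : h x₀ ∈ closure ((B ∩ G n) \ {h x₀}) := by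
      rw [← himg, ← Homeomorph.image_closure]
      exact mem_image_of_mem _ hacc
    exact hBnoacc n (h x₀) this
end

section
/- Let X be a topological space and let V be the union of all open subsets of X that are meager in X. Then V is an open subset of X that is of the first category in itself, and V contains every open subset of X that is of the first category in itself. -/
open Set Topology

/-- A subset `S` of a topological space `X` is meager in `X` if it is a countable union
of sets nowhere dense in `X`. -/
def MeagerIn {X : Type*} [TopologicalSpace X] (S : Set X) : Prop :=
  ∃ f : ℕ → Set X, (∀ n, IsNowhereDense (f n)) ∧ S = ⋃ n, f n

/-- A subset `S` of `X` is of the first category in itself if the subspace `S` is a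
countable union of sets nowhere dense in the subspace `S`. -/
def MeagerInItself {X : Type*} [TopologicalSpace X] (S : Set X) : Prop :=
  ∃ f : ℕ → Set ↥S, (∀ n, IsNowhereDense (f n)) ∧ (⋃ n, f n) = Set.univ

section Aux

variable {X : Type*} [TopologicalSpace X]

lemma aux_nwd_mono {s t : Set X} (hs : IsNowhereDense s) (hts : t ⊆ s) :
    IsNowhereDense t := by
  rw [IsNowhereDense, eq_empty_iff_forall_notMem] at hs ⊢
  exact fun x hx => hs x (interior_mono (closure_mono hts) hx)

lemma aux_isMeagre_iff_seq {s : Set X} :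
    IsMeagre s ↔ ∃ f : ℕ → Set X, (∀ n, IsNowhereDense (f n)) ∧ s ⊆ ⋃ n, f n := by
  rw [isMeagre_iff_countable_union_isNowhereDense]
  constructor
  · rintro ⟨S, hS, hSc, hsS⟩
    obtain ⟨f, hf⟩ := (hSc.insert ∅).exists_eq_range (insert_nonempty _ _)
    refine ⟨f, fun n => ?_, ?_⟩
    · have : f n ∈ insert ∅ S := hf ▸ mem_range_self n
      rcases this with h | h
      · rw [h]; exact isNowhereDense_empty
      · exact hS _ h
    · refine hsS.trans ?_
      intro x hx
      obtain ⟨t, ht, hxt⟩ := hx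
      have : t ∈ range f := hf ▸ (mem_insert_of_mem _ ht)
      obtain ⟨n, rfl⟩ := this
      exact mem_iUnion.mpr ⟨n, hxt⟩
  · rintro ⟨f, hf, hsf⟩
    exact ⟨range f, by rintro t ⟨n, rfl⟩; exact hf n, countable_range f,
      by rwa [sUnion_range]⟩

lemma aux_nwd_isMeagre {s : Set X} (hs : IsNowhereDense s) : IsMeagre s :=
  aux_isMeagre_iff_seq.mpr ⟨fun _ => s, fun _ => hs, subset_iUnion (fun _ => s) 0⟩

lemma aux_isMeagre_union {s t : Set X} (hs : IsMeagre s) (ht : IsMeagre t) :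
    IsMeagre (s ∪ t) := by
  rw [IsMeagre, compl_union]
  exact Filter.inter_mem hs ht

/-- The frontier of an open set is nowhere dense. -/
lemma aux_frontier_nwd {D : Set X} (hD : IsOpen D) :
    IsNowhereDense (closure D \ D) := by
  have hcl : IsClosed (closure D \ D) := isClosed_closure.sdiff hD
  rw [hcl.isNowhereDense_iff, eq_empty_iff_forall_notMem]
  intro x hx
  obtain ⟨u, hu, huo, hxu⟩ := mem_interior.mp hx
  have hxcl : x ∈ closure D := (hu hxu).1
  obtain ⟨y, hyu, hyD⟩ := mem_closure_iff.mp hxcl u huo hxu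
  exact (hu hyu).2 hyD

/-- A set nowhere dense in a subspace is nowhere dense in the whole space. -/
lemma aux_nwd_image {S : Set X} {A : Set ↥S} (hA : IsNowhereDense A) :
    IsNowhereDense ((Subtype.val : ↥S → X) '' A) := by
  rw [IsNowhereDense, eq_empty_iff_forall_notMem]
  intro x hx
  have hxcl : x ∈ closure (Subtype.val '' A) := interior_subset hx
  obtain ⟨y, hyO, a, haA, hay⟩ :=
    mem_closure_iff.mp hxcl _ isOpen_interior hx
  have hsub : (Subtype.val ⁻¹' interior (closure (Subtype.val '' A)) : Set ↥S)
      ⊆ closure A := by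
    rw [IsEmbedding.subtypeVal.closure_eq_preimage_closure_image]
    exact preimage_mono interior_subset
  have haq : a ∈ interior (closure A) :=
    interior_maximal hsub (isOpen_interior.preimage continuous_subtype_val)
      (by simpa [hay] using hyO)
  rw [hA] at haq
  exact haq

/-- The preimage in an open subspace of a nowhere dense set is nowhere dense. -/
lemma aux_nwd_preimage {S N : Set X} (hS : IsOpen S) (hN : IsNowhereDense N) :
    IsNowhereDense ((Subtype.val : ↥S → X) ⁻¹' N) := by
  rw [IsNowhereDense, eq_empty_iff_forall_notMem]
  intro x hx
  obtain ⟨u, hu, huo, hxu⟩ := mem_interior.mp hx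
  have himg : IsOpen (Subtype.val '' u) := hS.isOpenMap_subtype_val u huo
  have hsub : Subtype.val '' u ⊆ closure N := by
    rintro _ ⟨z, hzu, rfl⟩
    have hz : z ∈ closure ((Subtype.val : ↥S → X) ⁻¹' N) := hu hzu
    rw [IsEmbedding.subtypeVal.closure_eq_preimage_closure_image] at hz
    exact closure_mono (image_preimage_subset _ _) hz
  have : (x : X) ∈ interior (closure N) :=
    interior_maximal hsub himg ⟨x, hxu, rfl⟩
  rw [hN] at this
  exact this

/-- Banach category theorem: a union of open meagre sets is meagre. -/
lemma aux_banach {𝒰 : Set (Set X)} (h : ∀ U ∈ 𝒰, IsOpen U ∧ IsMeagre U) :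
    IsMeagre (⋃₀ 𝒰) := by
  classical
  -- The collection of families of pairwise disjoint nonempty open meagre sets
  set Pfam : Set (Set (Set X)) :=
    {𝒟 | (∀ W ∈ 𝒟, W.Nonempty ∧ IsOpen W ∧ IsMeagre W) ∧ 𝒟.PairwiseDisjoint id}
    with hPfam
  obtain ⟨𝒟, h𝒟mem, h𝒟max⟩ : ∃ 𝒟, Maximal (· ∈ Pfam) 𝒟 := by
    apply zorn_subset
    intro c hc hchain
    refine ⟨⋃₀ c, ⟨?_, ?_⟩, fun s hs => subset_sUnion_of_mem hs⟩
    · rintro W ⟨𝒟, h𝒟, hW⟩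
      exact (hc h𝒟).1 W hW
    · rintro W ⟨𝒟₁, h𝒟₁, hW₁⟩ W' ⟨𝒟₂, h𝒟₂, hW₂⟩ hne
      rcases hchain.total h𝒟₁ h𝒟₂ with hsub | hsub
      · exact (hc h𝒟₂).2 (hsub hW₁) hW₂ hne
      · exact (hc h𝒟₁).2 hW₁ (hsub hW₂) hne
  obtain ⟨hprop, hdisj⟩ := h𝒟mem
  set D := ⋃₀ 𝒟 with hD
  have hDopen : IsOpen D := isOpen_sUnion fun W hW => (hprop W hW).2.1
  -- choose nowhere dense covers for each member of 𝒟
  have hch : ∀ W ∈ 𝒟, ∃ f : ℕ → Set X, (∀ n, IsNowhereDense (f n)) ∧ W ⊆ ⋃ n, f n :=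
    fun W hW => aux_isMeagre_iff_seq.mp (hprop W hW).2.2
  choose! f hf1 hf2 using hch
  set N : Set X → ℕ → Set X := fun W n => f W n ∩ W with hNdef
  set M : ℕ → Set X := fun n => ⋃ W ∈ 𝒟, N W n with hMdef
  have hNW : ∀ W n, N W n ⊆ W := fun W n => inter_subset_right
  have hMD : ∀ n, M n ⊆ D := by
    intro n x hx
    obtain ⟨W, hW, hxW⟩ := mem_iUnion₂.mp hx
    exact ⟨W, hW, hNW W n hxW⟩
  -- each M n is nowhere dense
  have hMnwd : ∀ n, IsNowhereDense (M n) := by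
    intro n
    rw [IsNowhereDense, eq_empty_iff_forall_notMem]
    intro x hx
    have hOsub : interior (closure (M n)) ⊆ closure (M n) := interior_subset
    have hxclD : x ∈ closure D := closure_mono (hMD n) (hOsub hx)
    obtain ⟨y, hyO, hyD⟩ :=
      mem_closure_iff.mp hxclD _ isOpen_interior hx
    obtain ⟨W, hW𝒟, hyW⟩ := hyD
    have key : interior (closure (M n)) ∩ W ⊆ closure (N W n) := by
      intro z hz
      rw [mem_closure_iff]
      intro P hP hzP
      have hPO : IsOpen (P ∩ (interior (closure (M n)) ∩ W)) :=
        hP.inter (isOpen_interior.inter (hprop W hW𝒟).2.1)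
      have hzM : z ∈ closure (M n) := hOsub hz.1
      obtain ⟨w, ⟨hwP, hwO, hwW⟩, hwM⟩ :=
        mem_closure_iff.mp hzM _ hPO ⟨hzP, hz⟩
      obtain ⟨W', hW', hwN⟩ := mem_iUnion₂.mp hwM
      have hWW : W' = W := by
        by_contra hne
        exact (hdisj hW' hW𝒟 hne).le_bot ⟨hNW W' n hwN, hwW⟩
      exact ⟨w, hwP, hWW ▸ hwN⟩
    have hy : y ∈ interior (closure (N W n)) :=
      interior_maximal key (isOpen_interior.inter (hprop W hW𝒟).2.1) ⟨hyO, hyW⟩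
    have : IsNowhereDense (N W n) := aux_nwd_mono (hf1 W hW𝒟 n) inter_subset_left
    rw [this] at hy
    exact hy
  -- D is meagre
  have hDm : IsMeagre D := by
    refine (isMeagre_iUnion (fun n => aux_nwd_isMeagre (hMnwd n))).mono ?_
    rintro x ⟨W, hW, hxW⟩
    obtain ⟨n, hn⟩ := mem_iUnion.mp (hf2 W hW hxW)
    exact mem_iUnion.mpr ⟨n, mem_iUnion₂.mpr ⟨W, hW, hn, hxW⟩⟩
  -- the union is contained in the closure of D
  have hVD : ⋃₀ 𝒰 ⊆ closure D := by
    intro x hx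
    by_contra hxc
    obtain ⟨U, hU𝒰, hxU⟩ := hx
    set W' := U ∩ (closure D)ᶜ with hW'
    have hW'open : IsOpen W' := (h U hU𝒰).1.inter isClosed_closure.isOpen_compl
    have hW'ne : W'.Nonempty := ⟨x, hxU, hxc⟩
    have hW'm : IsMeagre W' := (h U hU𝒰).2.mono inter_subset_left
    have hins : insert W' 𝒟 ∈ Pfam := by
      constructor
      · rintro W (rfl | hW)
        · exact ⟨hW'ne, hW'open, hW'm⟩
        · exact hprop W hW
      · intro a ha b hb hab
        have hd : ∀ W ∈ 𝒟, Disjoint W' W := by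
          intro W hW
          refine disjoint_left.mpr fun t ht htW => ?_
          exact ht.2 (subset_closure ⟨W, hW, htW⟩)
        rcases ha with rfl | ha <;> rcases hb with rfl | hb
        · exact absurd rfl hab
        · exact hd b hb
        · exact (hd a ha).symm
        · exact hdisj ha hb hab
    have : W' ∈ 𝒟 := h𝒟max hins (subset_insert _ _) (mem_insert _ _)
    obtain ⟨t, htU, htc⟩ := hW'ne
    exact htc (subset_closure ⟨W', this, htU, htc⟩)
  -- conclude
  have hfr : IsMeagre (closure D \ D) := aux_nwd_isMeagre (aux_frontier_nwd hDopen)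
  refine (aux_isMeagre_union hDm hfr).mono ?_
  intro x hx
  by_cases hxD : x ∈ D
  · exact Or.inl hxD
  · exact Or.inr ⟨hVD hx, hxD⟩

end Aux

/-- Let `V` be the union of all open subsets of `X` that are meager in `X`. Then `V` is
open, `V` is of the first category in itself, and `V` contains every open subset of `X`
that is of the first category in itself. -/
theorem stmt_5 {X : Type*} [TopologicalSpace X]
    (V : Set X) (hV : V = ⋃₀ {U : Set X | IsOpen U ∧ MeagerIn U}) :
    IsOpen V ∧ MeagerInItself V ∧
      ∀ U : Set X, IsOpen U → MeagerInItself U → U ⊆ V := by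
  have hVopen : IsOpen V := by
    rw [hV]; exact isOpen_sUnion fun U hU => hU.1
  have hVm : IsMeagre V := by
    rw [hV]
    apply aux_banach
    rintro U ⟨hUo, f, hf, hUf⟩
    exact ⟨hUo, aux_isMeagre_iff_seq.mpr ⟨f, hf, hUf.le⟩⟩
  refine ⟨hVopen, ?_, ?_⟩
  · obtain ⟨f, hf, hVf⟩ := aux_isMeagre_iff_seq.mp hVm
    refine ⟨fun n => (Subtype.val : ↥V → X) ⁻¹' f n,
      fun n => aux_nwd_preimage hVopen (hf n), ?_⟩
    ext x
    simp only [mem_iUnion, mem_preimage, mem_univ, iff_true]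
    exact mem_iUnion.mp (hVf x.2)
  · rintro U hUo ⟨f, hf, hUf⟩
    have hUm : MeagerIn U := by
      refine ⟨fun n => Subtype.val '' f n, fun n => aux_nwd_image (hf n), ?_⟩
      rw [← image_iUnion, hUf, image_univ, Subtype.range_coe]
    rw [hV]
    exact subset_sUnion_of_mem ⟨hUo, hUm⟩
end

section
/- No densely homogeneous metrizable space without isolated points is itself σ-discrete; that is, if X is a metrizable space without isolated points that has a dense σ-discrete subset and for any two σ-discrete dense subsets A, B of X there is a self-homeomorphism of X mapping A onto B, then X cannot be written as a countable union of sets each of which is discrete in X. -/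
open Set Topology

/-- No densely homogeneous metrizable space without isolated points is itself
σ-discrete: if `X` is a (nonempty) metrizable space without isolated points which has a
dense σ-discrete subset and such that any two σ-discrete dense subsets are mapped onto
each other by a self-homeomorphism, then `X` is not a countable union of sets each
discrete in `X`. -/
theorem stmt_12 {X : Type*} [TopologicalSpace X] [TopologicalSpace.MetrizableSpace X]
    [Nonempty X]
    (hni : ∀ x : X, ¬ IsOpen ({x} : Set X))
    (hdense : ∃ A : Set X, Dense A ∧ SigmaDiscrete A)
    (hDH : ∀ A B : Set X, Dense A → SigmaDiscrete A → Dense B → SigmaDiscrete B →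
      ∃ h : X ≃ₜ X, h '' A = B) :
    ¬ SigmaDiscrete (Set.univ : Set X) := by
  rintro ⟨f, hf, hsub⟩
  obtain ⟨x₀⟩ := ‹Nonempty X›
  set A : Set X := {x₀}ᶜ with hA
  have hAdense : Dense A := dense_compl_singleton_iff_not_open.2 (hni x₀)
  have hAsd : SigmaDiscrete A := by
    refine ⟨fun n => f n ∩ A, ?_, ?_⟩
    · rw [← iUnion_inter, ← hf, univ_inter]
    · intro n x
      obtain ⟨U, hU, hUs⟩ := hsub n x
      exact ⟨U, hU, hUs.anti (by intro y hy; exact ⟨hy.1, hy.2.1⟩)⟩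
  obtain ⟨h, hh⟩ := hDH A univ hAdense hAsd dense_univ ⟨f, hf, hsub⟩
  have : A = univ := by
    have : h '' A = h '' univ := by
      rw [hh, image_univ]
      exact (h.surjective.range_eq).symm
    exact (image_eq_image h.injective).1 this
  have hx : x₀ ∈ A := this ▸ mem_univ x₀
  exact hx rfl
end

section
/- Every countable dense homogeneous separable metrizable space of the first category is a λ-set; that is, if X is a separable metrizable space that is a countable union of nowhere dense subsets and for any two countable dense subsets A, B of X there is a self-homeomorphism of X mapping A onto B, then every countable subset of X is a Gδ-set in X. -/
open Set Topology

/-- Complement of a countable set is Gδ in a T1 space. -/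
lemma aux_compl_countable_isGδ {X : Type*} [TopologicalSpace X] [T1Space X] {s : Set X}
    (hs : s.Countable) : IsGδ sᶜ := by
  have : sᶜ = ⋂ x ∈ s, ({x} : Set X)ᶜ := by
    simp [← compl_iUnion₂, biUnion_of_singleton]
  rw [this]
  exact IsGδ.biInter hs fun x _ => isOpen_compl_singleton.isGδ

/-- Preimage of a Gδ set under a continuous map is Gδ. -/
lemma aux_isGδ_preimage {X Y : Type*} [TopologicalSpace X] [TopologicalSpace Y]
    {g : X → Y} (hg : Continuous g) {s : Set Y} (hs : IsGδ s) : IsGδ (g ⁻¹' s) := by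
  obtain ⟨f, hf, rfl⟩ := hs.eq_iInter_nat
  rw [preimage_iInter]
  exact IsGδ.iInter fun n => ((hf n).preimage hg).isGδ

/-- Every countable dense homogeneous separable metrizable space of the first category
is a `λ`-set: every countable subset of `X` is a `Gδ`-set in `X`. -/
theorem stmt_14 {X : Type*} [TopologicalSpace X] [TopologicalSpace.MetrizableSpace X]
    [TopologicalSpace.SeparableSpace X]
    (hmeager : ∃ f : ℕ → Set X, (∀ n, IsNowhereDense (f n)) ∧ (⋃ n, f n) = Set.univ)
    (hCDH : ∀ A B : Set X, A.Countable → Dense A → B.Countable → Dense B →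
      ∃ h : X ≃ₜ X, h '' A = B)
    (A : Set X) (hA : A.Countable) : IsGδ A := by
  letI : MetricSpace X := TopologicalSpace.metrizableSpaceMetric X
  haveI : SecondCountableTopology X := UniformSpace.secondCountable_of_separable X
  cases isEmpty_or_nonempty X with
  | inl h => simpa [Set.eq_empty_of_isEmpty A] using IsGδ.empty
  | inr hne =>
  obtain ⟨f, hfnd, hfU⟩ := hmeager
  -- finite intersections of the dense open complements of closures are dense
  have key : ∀ k : ℕ, Dense (⋂ i ∈ Finset.range k, (closure (f i))ᶜ) := by
    intro k
    induction k with
    | zero => simpa using dense_univ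
    | succ k ih =>
      rw [Finset.range_add_one, Finset.set_biInter_insert]
      refine Dense.inter_of_isOpen_left ?_ ih isClosed_closure.isOpen_compl
      exact interior_eq_empty_iff_dense_compl.1 (hfnd k)
  -- enumerate a countable basis
  have hb := TopologicalSpace.isBasis_countableBasis X
  have hbc := TopologicalSpace.countable_countableBasis X
  have hbne : (TopologicalSpace.countableBasis X).Nonempty := by
    obtain ⟨x⟩ := hne
    obtain ⟨s, hs, -, -⟩ := hb.exists_subset_of_mem_open (mem_univ x) isOpen_univ
    exact ⟨s, hs⟩
  obtain ⟨e, he⟩ := hbc.exists_eq_range hbne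
  -- pick points in each basic open set avoiding the first closures
  have hpick : ∀ k : ℕ, ∃ x, x ∈ e k ∧ ∀ i ≤ k, x ∉ closure (f i) := by
    intro k
    have hek : e k ∈ TopologicalSpace.countableBasis X := by
      rw [he]; exact mem_range_self k
    have hopen : IsOpen (e k) := hb.isOpen hek
    have hnonempty : (e k).Nonempty := TopologicalSpace.nonempty_of_mem_countableBasis hek
    obtain ⟨x, hx1, hx2⟩ := (key (k + 1)).inter_open_nonempty (e k) hopen hnonempty
    refine ⟨x, hx1, fun i hi => ?_⟩
    have := mem_iInter₂.1 hx2 i (Finset.mem_range.2 (Nat.lt_succ_of_le hi))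
    exact this
  choose g hg1 hg2 using hpick
  -- D = range g is a countable dense Gδ set
  have hDc : (range g).Countable := countable_range g
  have hDd : Dense (range g) := by
    rw [dense_iff_inter_open]
    intro U hU ⟨x, hx⟩
    obtain ⟨s, hs, hxs, hsU⟩ := hb.exists_subset_of_mem_open hx hU
    rw [he] at hs
    obtain ⟨k, rfl⟩ := hs
    exact ⟨g k, hsU (hg1 k), mem_range_self k⟩
  have hDGδ : IsGδ (range g) := by
    have heq : range g = ⋂ n, ((closure (f n))ᶜ ∪ (range g ∩ closure (f n))) := by
      ext x
      constructor
      · intro hx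
        refine mem_iInter.2 fun n => ?_
        by_cases h : x ∈ closure (f n)
        · exact Or.inr ⟨hx, h⟩
        · exact Or.inl h
      · intro hx
        have : x ∈ ⋃ n, f n := hfU ▸ mem_univ x
        obtain ⟨n, hn⟩ := mem_iUnion.1 this
        have hxn : x ∈ closure (f n) := subset_closure hn
        rcases mem_iInter.1 hx n with h | h
        · exact absurd hxn h
        · exact h.1
    rw [heq]
    refine IsGδ.iInter fun n => IsGδ.union (isClosed_closure.isOpen_compl.isGδ) ?_
    have hfin : (range g ∩ closure (f n)).Finite := by
      have : range g ∩ closure (f n) ⊆ g '' (Iio n) := by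
        rintro x ⟨⟨k, rfl⟩, hxc⟩
        refine ⟨k, ?_, rfl⟩
        by_contra hk
        exact hg2 k n (le_of_not_gt hk) hxc
      exact ((finite_Iio n).image g).subset this
    exact hfin.isClosed.isGδ
  -- apply CDH to D and A ∪ D
  have hBd : Dense (A ∪ range g) := hDd.mono subset_union_right
  have hBc : (A ∪ range g).Countable := hA.union hDc
  obtain ⟨h, hh⟩ := hCDH (range g) (A ∪ range g) hDc hDd hBc hBd
  have hBGδ : IsGδ (A ∪ range g) := by
    rw [← hh, ← Homeomorph.preimage_symm]
    exact aux_isGδ_preimage h.symm.continuous hDGδ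
  -- A = (A ∪ D) minus a countable set
  have hAeq : A = (A ∪ range g) ∩ ((A ∪ range g) \ A)ᶜ := by
    ext x
    simp only [mem_inter_iff, mem_union, mem_compl_iff, mem_diff, not_and, not_not]
    tauto
  rw [hAeq]
  refine hBGδ.inter (aux_compl_countable_isGδ ?_)
  exact hDc.mono fun x hx => (hx.1.resolve_left fun h => hx.2 h)
end
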